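/- For every finite-dimensional irreducible complex G-representation V and every element Z of the center of A^G, there is a scalar χ(Z) ∈ ℂ such that Z ∘ T = χ(Z)·T for all T ∈ Hom_G(V, L); if Hom_G(V, L) ≠ 0, the map Z ↦ χ(Z) is a ℂ-algebra homomorphism from the center of A^G to ℂ (the central character of the A^G-module Hom_G(V, L)). (Abstract Frobenius decomposition, Theorem 2.2, part 3.) -/

import Mathlib

/-- Conjugation action of a group element on endomorphisms of `L`:
`g · T := ρ(g) ∘ T ∘ ρ(g)⁻¹`. -/
def conjEnd {G L : Type*} [Group G] [AddCommGroup L] [Module ℂ L]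
    (ρ : Representation ℂ G L) (g : G) :
    Module.End ℂ L →ₗ[ℂ] Module.End ℂ L where
  toFun T := ρ g ∘ₗ T ∘ₗ ρ g⁻¹
  map_add' T S := by ext v; simp
  map_smul' c T := by ext v; simp

/-- `Z` is a `G`-invariant element of `A` lying in the center of the invariant
algebra `A^G`. -/
def IsCentralInvariant {G L : Type*} [Group G] [AddCommGroup L] [Module ℂ L]
    (ρ : Representation ℂ G L) (A : Subalgebra ℂ (Module.End ℂ L))
    (Z : Module.End ℂ L) : Prop :=
  Z ∈ A ∧ (∀ g : G, conjEnd ρ g Z = Z) ∧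
    ∀ D ∈ A, (∀ g : G, conjEnd ρ g D = D) → Z * D = D * Z

/-- The space `Hom_G(V, L)` of `G`-equivariant linear maps `V →ₗ[ℂ] L`. -/
def homG {G L V : Type*} [Group G] [AddCommGroup L] [Module ℂ L]
    [AddCommGroup V] [Module ℂ V]
    (ρ : Representation ℂ G L) (π : Representation ℂ G V) :
    Submodule ℂ (V →ₗ[ℂ] L) where
  carrier := {T | ∀ g : G, T ∘ₗ π g = ρ g ∘ₗ T}
  add_mem' := by
    intro T S hT hS g
    rw [LinearMap.add_comp, LinearMap.comp_add, hT g, hS g]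
  zero_mem' := by
    intro g
    rw [LinearMap.zero_comp, LinearMap.comp_zero]
  smul_mem' := by
    intro c T hT g
    rw [LinearMap.smul_comp, LinearMap.comp_smul, hT g]



open Polynomial in
lemma aeval_inj_of_ne_zero {M : Type*} [AddCommGroup M] [Module ℂ M] (φ : Module.End ℂ M)
    (H : ∀ c : ℂ, Function.Injective (φ - c • (1 : Module.End ℂ M)))
    {q : ℂ[X]} (hq : q ≠ 0) : Function.Injective (aeval φ q) := by
  suffices h : ∀ (n : ℕ) (q : ℂ[X]), q ≠ 0 → q.natDegree = n → Function.Injective (aeval φ q) from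
    h q.natDegree q hq rfl
  intro n
  induction n using Nat.strong_induction_on with
  | _ n ih =>
    intro q hq hn
    rcases eq_or_ne n 0 with rfl | hn0
    · have hc : q = C (q.coeff 0) := (Polynomial.eq_C_of_natDegree_eq_zero hn)
      rw [hc, aeval_C]
      have h0 : q.coeff 0 ≠ 0 := by
        intro h; apply hq; rw [hc, h, map_zero]
      intro a b hab
      have := congrArg (fun m => (q.coeff 0)⁻¹ • m) hab
      simpa [Module.algebraMap_end_eq_smul_id, smul_smul, inv_mul_cancel₀ h0] using this
    · have hdpos : 0 < q.degree := natDegree_pos_iff_degree_pos.mp (by omega)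
      obtain ⟨r, hr⟩ := Complex.exists_root hdpos
      have hdvd : X - C r ∣ q := dvd_iff_isRoot.mpr hr
      obtain ⟨q', rfl⟩ := hdvd
      have hq' : q' ≠ 0 := fun h => hq (by rw [h, mul_zero])
      have hdeg : q'.natDegree < n := by
        rw [← hn, natDegree_mul (X_sub_C_ne_zero r) hq', natDegree_X_sub_C]
        omega
      rw [map_mul]
      have h1 : aeval φ (X - C r) = φ - r • 1 := by
        simp [Module.algebraMap_end_eq_smul_id]
        rfl
      have hcomp : ⇑(aeval φ (X - C r) * aeval φ q') = ⇑(aeval φ (X - C r)) ∘ ⇑(aeval φ q') := rfl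
      rw [hcomp]
      exact Function.Injective.comp (by rw [h1]; exact H r) (ih _ hdeg q' hq' rfl)

open Polynomial in
lemma dixmier {M : Type*} [AddCommGroup M] [Module ℂ M]
    (hrank : Module.rank ℂ M ≤ Cardinal.aleph0) {v₀ : M} (hv₀ : v₀ ≠ 0)
    (φ : Module.End ℂ M)
    (hinj : ∀ c : ℂ, Function.Injective (φ - c • (1 : Module.End ℂ M)))
    (hsurj : ∀ c : ℂ, Function.Surjective (φ - c • (1 : Module.End ℂ M))) :
    False := by
  have haev : ∀ q : ℂ[X], q ≠ 0 → Function.Injective (aeval φ q) :=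
    fun q hq => aeval_inj_of_ne_zero φ hinj hq
  set u : ℂ → M := fun c => Function.surjInv (hsurj c) v₀ with hu
  have hψu : ∀ c, (φ - c • (1 : Module.End ℂ M)) (u c) = v₀ := fun c => Function.surjInv_eq (hsurj c) v₀
  have hli : LinearIndependent ℂ u := by
    rw [linearIndependent_iff']
    intro s g hsum c₀ hc₀
    by_contra hg
    set P : ℂ[X] := ∏ c ∈ s, (X - C c) with hP
    have key : ∀ c ∈ s, (aeval φ P) (u c) = (aeval φ (∏ c' ∈ s.erase c, (X - C c'))) v₀ := by
      intro c hc
      rw [hP, ← Finset.prod_erase_mul s _ hc, map_mul]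
      have : ((aeval φ) (∏ c' ∈ s.erase c, (X - C c')) * (aeval φ) (X - C c)) (u c)
          = ((aeval φ) (∏ c' ∈ s.erase c, (X - C c'))) (((aeval φ) (X - C c)) (u c)) := rfl
      rw [this]
      congr 1
      have h1 : (aeval φ) (X - C c) = φ - c • 1 := by
        simp [Module.algebraMap_end_eq_smul_id]; rfl
      rw [h1, hψu]
    set q : ℂ[X] := ∑ c ∈ s, C (g c) * ∏ c' ∈ s.erase c, (X - C c') with hq
    have hqv : (aeval φ q) v₀ = 0 := by
      have : (aeval φ q) v₀ = ∑ c ∈ s, g c • ((aeval φ (∏ c' ∈ s.erase c, (X - C c'))) v₀) := by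
        rw [hq, map_sum]
        simp only [LinearMap.coe_sum, Finset.sum_apply]
        refine Finset.sum_congr rfl fun c hc => ?_
        rw [map_mul, aeval_C]
        simp [Module.algebraMap_end_eq_smul_id]
      rw [this]
      have : ∑ c ∈ s, g c • ((aeval φ (∏ c' ∈ s.erase c, (X - C c'))) v₀)
          = (aeval φ P) (∑ c ∈ s, g c • u c) := by
        rw [map_sum]
        refine Finset.sum_congr rfl fun c hc => ?_
        rw [map_smul, key c hc]
      rw [this, hsum, map_zero]
    have hq0 : q ≠ 0 := by
      intro h0
      apply hg
      have hev : q.eval c₀ = g c₀ * ∏ c' ∈ s.erase c₀, (c₀ - c') := by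
        rw [hq, eval_finset_sum]
        rw [Finset.sum_eq_single c₀]
        · simp [eval_prod]
        · intro c hc hne
          have hmem : c₀ ∈ s.erase c := Finset.mem_erase.mpr ⟨Ne.symm hne, hc₀⟩
          rw [eval_mul, eval_prod, Finset.prod_eq_zero hmem (by simp), mul_zero]
        · intro h; exact absurd hc₀ h
      have : g c₀ * ∏ c' ∈ s.erase c₀, (c₀ - c') = 0 := by rw [← hev, h0, eval_zero]
      rcases mul_eq_zero.mp this with h | h
      · exact h
      · obtain ⟨c', hc', h0'⟩ := Finset.prod_eq_zero_iff.mp h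
        exact absurd (sub_eq_zero.mp h0').symm (Finset.mem_erase.mp hc').1
    exact hv₀ (haev q hq0 (by rw [hqv, map_zero]))
  have h1 := hli.cardinal_lift_le_rank
  rw [Cardinal.mk_complex] at h1
  have h2 := h1.trans (Cardinal.lift_le.mpr hrank)
  rw [Cardinal.lift_continuum, Cardinal.lift_aleph0] at h2
  exact absurd h2 Cardinal.aleph0_lt_continuum.not_ge

section Aux
variable {L : Type*} [AddCommGroup L] [Module ℂ L]
  (A : Subalgebra ℂ (Module.End ℂ L))
  (hAirr : ∀ p : Submodule ℂ L, (∀ T ∈ A, ∀ x ∈ p, T x ∈ p) → p = ⊥ ∨ p = ⊤)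

lemma bij_of_commutes (hAirr : ∀ p : Submodule ℂ L, (∀ T ∈ A, ∀ x ∈ p, T x ∈ p) → p = ⊥ ∨ p = ⊤)
    (ψ : Module.End ℂ L) (hψ : ∀ T ∈ A, ψ * T = T * ψ) (hne : ψ ≠ 0) :
    Function.Bijective ψ := by
  have hker : LinearMap.ker ψ = ⊥ ∨ LinearMap.ker ψ = ⊤ := by
    refine hAirr _ fun T hT x hx => ?_
    have : ψ (T x) = T (ψ x) := congrFun (congrArg DFunLike.coe (hψ T hT)) x
    rw [LinearMap.mem_ker] at hx ⊢
    rw [this, hx, map_zero]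
  have hran : LinearMap.range ψ = ⊥ ∨ LinearMap.range ψ = ⊤ := by
    refine hAirr _ fun T hT x hx => ?_
    obtain ⟨u, rfl⟩ := LinearMap.mem_range.mp hx
    exact ⟨T u, congrFun (congrArg DFunLike.coe (hψ T hT)) u⟩
  rcases hker with hk | hk
  · rcases hran with hr | hr
    · exact absurd (LinearMap.range_eq_bot.mp hr) hne
    · exact ⟨LinearMap.ker_eq_bot.mp hk, LinearMap.range_eq_top.mp hr⟩
  · exact absurd (LinearMap.ker_eq_top.mp hk) hne

lemma commutant_scalar (hrank : Module.rank ℂ L ≤ Cardinal.aleph0)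
    (hAirr : ∀ p : Submodule ℂ L, (∀ T ∈ A, ∀ x ∈ p, T x ∈ p) → p = ⊥ ∨ p = ⊤)
    {v₀ : L} (hv₀ : v₀ ≠ 0)
    (d : Module.End ℂ L) (hd : ∀ T ∈ A, d * T = T * d) :
    ∃ c : ℂ, d = c • 1 := by
  by_contra hc
  push_neg at hc
  have key : ∀ c : ℂ, Function.Bijective (d - c • (1 : Module.End ℂ L)) := by
    intro c
    refine bij_of_commutes A hAirr _ (fun T hT => ?_) (fun h => hc c (by rwa [sub_eq_zero] at h))
    rw [sub_mul, mul_sub, hd T hT, Algebra.smul_mul_assoc, Algebra.mul_smul_comm, one_mul, mul_one]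
  exact dixmier hrank hv₀ d (fun c => (key c).1) (fun c => (key c).2)

lemma density (hrank : Module.rank ℂ L ≤ Cardinal.aleph0)
    (hAirr : ∀ p : Submodule ℂ L, (∀ T ∈ A, ∀ x ∈ p, T x ∈ p) → p = ⊥ ∨ p = ⊤) :
    ∀ (n : ℕ) (x : Fin n → L), LinearIndependent ℂ x → ∀ y : Fin n → L,
      ∃ a ∈ A, ∀ i, a (x i) = y i := by
  intro n
  induction n with
  | zero => exact fun x _ y => ⟨0, zero_mem _, fun i => i.elim0⟩
  | succ n ih =>
    intro x hx y
    suffices h : ∀ i : Fin (n + 1), ∃ a ∈ A, a (x i) = y i ∧ ∀ j, j ≠ i → a (x j) = 0 by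
      choose a haA ha1 ha2 using h
      refine ⟨∑ i, a i, sum_mem fun i _ => haA i, fun i => ?_⟩
      rw [LinearMap.sum_apply, Finset.sum_eq_single i]
      · exact ha1 i
      · exact fun j _ hji => ha2 j i (Ne.symm hji)
      · exact fun hi => absurd (Finset.mem_univ i) hi
    intro i
    set W : Submodule ℂ L :=
      { carrier := {w : L | ∃ a ∈ A, (∀ j, j ≠ i → a (x j) = 0) ∧ a (x i) = w}
        add_mem' := by
          rintro w₁ w₂ ⟨a, haA, ha0, rfl⟩ ⟨b, hbA, hb0, rfl⟩
          exact ⟨a + b, add_mem haA hbA,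
            fun j hj => by rw [LinearMap.add_apply, ha0 j hj, hb0 j hj, add_zero], rfl⟩
        zero_mem' := ⟨0, zero_mem _, fun j _ => rfl, rfl⟩
        smul_mem' := by
          rintro c w ⟨a, haA, ha0, rfl⟩
          exact ⟨c • a, SMulMemClass.smul_mem c haA,
            fun j hj => by rw [LinearMap.smul_apply, ha0 j hj, smul_zero], rfl⟩ } with hW
    have hWstable : ∀ T ∈ A, ∀ w ∈ W, T w ∈ W := by
      rintro T hT w ⟨a, haA, ha0, rfl⟩
      exact ⟨T * a, mul_mem hT haA,
        fun j hj => by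
          show T (a (x j)) = 0
          rw [ha0 j hj, map_zero], rfl⟩
    rcases hAirr W hWstable with hbot | htop
    · exfalso
      -- every a ∈ A vanishing on the other x j also vanishes on x i
      have hker : ∀ a ∈ A, (∀ j, j ≠ i → a (x j) = 0) → a (x i) = 0 := by
        intro a haA h0
        have : a (x i) ∈ W := ⟨a, haA, h0, rfl⟩
        rw [hbot] at this
        exact this
      set x' : Fin n → L := x ∘ i.succAbove with hx'
      have hx'li : LinearIndependent ℂ x' := hx.comp _ Fin.succAbove_right_injective
      have wd : ∀ a b : Module.End ℂ L, a ∈ A → b ∈ A →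
          (∀ j, a (x' j) = b (x' j)) → a (x i) = b (x i) := by
        intro a b haA hbA hab
        have := hker (a - b) (sub_mem haA hbA) (fun j hj => by
          obtain ⟨k, rfl⟩ := Fin.exists_succAbove_eq hj
          show a (x' k) - b (x' k) = 0
          rw [hab k, sub_self])
        exact sub_eq_zero.mp this
      choose aa haaA haav using fun v : Fin n → L => ih x' hx'li v
      have hv0 : x i ≠ 0 := hx.ne_zero i
      -- the graph linear map f : (Fin n → L) → L
      set f : (Fin n → L) →ₗ[ℂ] L :=
        { toFun := fun v => aa v (x i)
          map_add' := by
            intro v w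
            have : aa (v + w) (x i) = (aa v + aa w) (x i) :=
              wd _ _ (haaA _) (add_mem (haaA v) (haaA w))
                (fun j => by rw [haav (v + w) j, LinearMap.add_apply, haav, haav]; rfl)
            simpa using this
          map_smul' := by
            intro c v
            have : aa (c • v) (x i) = (c • aa v) (x i) :=
              wd _ _ (haaA _) (SMulMemClass.smul_mem c (haaA v))
                (fun j => by rw [haav (c • v) j, LinearMap.smul_apply, haav]; rfl)
            simpa using this } with hf
      have hequiv : ∀ T ∈ A, ∀ v : Fin n → L, f (fun k => T (v k)) = T (f v) := by
        intro T hT v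
        show aa (fun k => T (v k)) (x i) = T (aa v (x i))
        have : aa (fun k => T (v k)) (x i) = (T * aa v) (x i) :=
          wd _ _ (haaA _) (mul_mem hT (haaA v))
            (fun j => by
              rw [haav (fun k => T (v k)) j]
              show T (v j) = T (aa v (x' j))
              rw [haav])
        rw [this]; rfl
      -- component endomorphisms
      set d : Fin n → Module.End ℂ L := fun j =>
        { toFun := fun u => f (Pi.single j u)
          map_add' := fun u u' => by
            show f (Pi.single j (u + u')) = f (Pi.single j u) + f (Pi.single j u')
            rw [Pi.single_add, map_add]
          map_smul' := fun cc u => by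
            show f (Pi.single j (cc • u)) = cc • f (Pi.single j u)
            rw [Pi.single_smul, map_smul] } with hd
      have hdcomm : ∀ j, ∀ T ∈ A, d j * T = T * d j := by
        intro j T hT
        ext u
        show f (Pi.single j (T u)) = T (f (Pi.single j u))
        rw [← hequiv T hT]
        congr 1
        funext k
        rcases eq_or_ne k j with rfl | hk
        · simp
        · simp [Pi.single_eq_of_ne hk]
      have hdscal : ∀ j, ∃ c : ℂ, d j = c • 1 :=
        fun j => commutant_scalar A hrank hAirr hv0 (d j) (hdcomm j)
      choose c hcs using hdscal
      -- x i = f x' = ∑ j, c j • x' j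
      have h1 : f x' = x i := by
        show aa x' (x i) = x i
        have : aa x' (x i) = (1 : Module.End ℂ L) (x i) :=
          wd _ _ (haaA _) (one_mem A) (fun j => by rw [haav]; rfl)
        rw [this]; rfl
      have h2 : f x' = ∑ j, c j • x' j := by
        have hsingle : x' = ∑ j, Pi.single j (x' j) := (Finset.univ_sum_single x').symm
        conv_lhs => rw [hsingle]
        rw [map_sum]
        refine Finset.sum_congr rfl fun j _ => ?_
        show d j (x' j) = c j • x' j
        rw [hcs j]
        rfl
      have : x i ∈ Submodule.span ℂ (x '' {i}ᶜ) := by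
        rw [← h1, h2]
        refine Submodule.sum_mem _ fun j _ => Submodule.smul_mem _ _ (Submodule.subset_span ?_)
        exact ⟨i.succAbove j, Fin.succAbove_ne i j, rfl⟩
      exact hx.notMem_span_image (by simp) this
    · obtain ⟨a, haA, ha0, hai⟩ : y i ∈ W := htop ▸ Submodule.mem_top
      exact ⟨a, haA, hai, ha0⟩
end Aux

lemma rho_cancel₁ {G L : Type*} [Group G] [AddCommGroup L] [Module ℂ L]
    (ρ : Representation ℂ G L) (g : G) (v : L) : (ρ g) ((ρ g⁻¹) v) = v := by
  have : (ρ g * ρ g⁻¹) v = (1 : Module.End ℂ L) v := by rw [← map_mul, mul_inv_cancel, map_one]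
  simpa using this

lemma rho_cancel₂ {G L : Type*} [Group G] [AddCommGroup L] [Module ℂ L]
    (ρ : Representation ℂ G L) (g : G) (v : L) : (ρ g⁻¹) ((ρ g) v) = v := by
  have : (ρ g⁻¹ * ρ g) v = (1 : Module.End ℂ L) v := by rw [← map_mul, inv_mul_cancel, map_one]
  simpa using this

lemma conjEnd_mul {G L : Type*} [Group G] [AddCommGroup L] [Module ℂ L]
    (ρ : Representation ℂ G L) (g : G) (T S : Module.End ℂ L) :
    conjEnd ρ g (T * S) = conjEnd ρ g T * conjEnd ρ g S := by
  show ρ g ∘ₗ (T * S) ∘ₗ ρ g⁻¹ = (ρ g ∘ₗ T ∘ₗ ρ g⁻¹) * (ρ g ∘ₗ S ∘ₗ ρ g⁻¹)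
  ext v
  show (ρ g) (T (S ((ρ g⁻¹) v))) = (ρ g) (T ((ρ g⁻¹) ((ρ g) (S ((ρ g⁻¹) v)))))
  rw [rho_cancel₂]

lemma conjEnd_one {G L : Type*} [Group G] [AddCommGroup L] [Module ℂ L]
    (ρ : Representation ℂ G L) (g : G) :
    conjEnd ρ g (1 : Module.End ℂ L) = 1 := by
  show ρ g ∘ₗ (1 : Module.End ℂ L) ∘ₗ ρ g⁻¹ = 1
  ext v
  show (ρ g) ((ρ g⁻¹) v) = v
  exact rho_cancel₁ ρ g v

/-- If `u` is conjugation-invariant then `u` commutes with every `ρ g`. -/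
lemma inv_comm {G L : Type*} [Group G] [AddCommGroup L] [Module ℂ L]
    (ρ : Representation ℂ G L) {u : Module.End ℂ L} (hu : ∀ g : G, conjEnd ρ g u = u)
    (g : G) (v : L) : u (ρ g v) = ρ g (u v) := by
  have h := congrFun (congrArg DFunLike.coe (hu g)) (ρ g v)
  have h2 : (ρ g⁻¹) ((ρ g) v) = v := by
    have : (ρ g⁻¹ * ρ g) v = (1 : Module.End ℂ L) v := by rw [← map_mul, inv_mul_cancel, map_one]
    simpa using this
  show u ((ρ g) v) = _
  calc u ((ρ g) v) = (ρ g) (u ((ρ g⁻¹) ((ρ g) v))) := (h.symm : _)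
    _ = (ρ g) (u v) := by rw [h2]

lemma transitivity {G L : Type*} [Group G] [AddCommGroup L] [Module ℂ L]
    (ρ : Representation ℂ G L)
    (hrank : Module.rank ℂ L ≤ Cardinal.aleph0)
    (A : Subalgebra ℂ (Module.End ℂ L))
    (hAirr : ∀ p : Submodule ℂ L, (∀ T ∈ A, ∀ x ∈ p, T x ∈ p) → p = ⊥ ∨ p = ⊤)
    (hAcompred : ∀ p : Submodule ℂ (Module.End ℂ L),
      p ≤ Subalgebra.toSubmodule A → (∀ g : G, ∀ S ∈ p, conjEnd ρ g S ∈ p) →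
      ∃ q : Submodule ℂ (Module.End ℂ L), q ≤ Subalgebra.toSubmodule A ∧
        (∀ g : G, ∀ S ∈ q, conjEnd ρ g S ∈ q) ∧
        p ⊓ q = ⊥ ∧ p ⊔ q = Subalgebra.toSubmodule A)
    {V : Type*} [AddCommGroup V] [Module ℂ V] [FiniteDimensional ℂ V]
    (π : Representation ℂ G V)
    (hVirr : ∀ p : Submodule ℂ V, (∀ g : G, ∀ v ∈ p, π g v ∈ p) → p = ⊥ ∨ p = ⊤)
    {T S : V →ₗ[ℂ] L} (hT : T ∈ homG ρ π) (hS : S ∈ homG ρ π) (hT0 : T ≠ 0) :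
    ∃ b : Module.End ℂ L, b ∈ A ∧ (∀ g : G, conjEnd ρ g b = b) ∧ b ∘ₗ T = S := by
  -- T is injective
  have hTinj : LinearMap.ker T = ⊥ := by
    rcases hVirr (LinearMap.ker T) (fun g v hv => by
      rw [LinearMap.mem_ker] at hv ⊢
      have := congrFun (congrArg DFunLike.coe (hT g)) v
      simp only [LinearMap.comp_apply] at this
      rw [this, hv, map_zero]) with h | h
    · exact h
    · exact absurd (LinearMap.ker_eq_top.mp h) hT0
  -- basis of V and density
  set bV := Module.finBasis ℂ V with hbV
  have hxli : LinearIndependent ℂ (fun i => T (bV i)) :=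
    (bV.linearIndependent).map' T hTinj
  obtain ⟨a, haA, hax⟩ := density A hrank hAirr _ _ hxli (fun i => S (bV i))
  -- Φ : u ↦ u ∘ₗ T
  set Φ : Module.End ℂ L →ₗ[ℂ] (V →ₗ[ℂ] L) :=
    { toFun := fun u => u ∘ₗ T
      map_add' := fun u v => LinearMap.add_comp _ _ _
      map_smul' := fun c u => LinearMap.smul_comp _ _ _ } with hΦ
  have hΦa : Φ a = S := bV.ext fun i => hax i
  -- the submodule of invariant endomorphisms
  set F : Submodule ℂ (Module.End ℂ L) :=
    { carrier := {u | ∀ g : G, conjEnd ρ g u = u}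
      add_mem' := fun hu hv g => by rw [map_add, hu g, hv g]
      zero_mem' := fun g => map_zero _
      smul_mem' := fun c u hu g => by rw [map_smul, hu g] } with hF
  set p := Subalgebra.toSubmodule A ⊓ F with hp
  obtain ⟨q, hqA, hqst, hpq0, hpq⟩ := hAcompred p inf_le_left
    (fun g u hu => by
      have : conjEnd ρ g u = u := hu.2 g
      rw [this]; exact hu)
  have haSup : a ∈ p ⊔ q := by rw [hpq]; exact haA
  obtain ⟨b, hb, a', ha', hba⟩ := Submodule.mem_sup.mp haSup
  -- Φ a' lands in homG
  have hΦb : Φ b ∈ homG ρ π := by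
    intro g
    ext v
    show b (T (π g v)) = ρ g (b (T v))
    have h1 := congrFun (congrArg DFunLike.coe (hT g)) v
    simp only [LinearMap.comp_apply] at h1
    rw [h1, inv_comm ρ hb.2 g (T v)]
  have hΦa' : Φ a' ∈ homG ρ π := by
    have : Φ a' = S - Φ b := by rw [← hΦa, ← hba, map_add]; abel
    rw [this]; exact sub_mem hS hΦb
  -- kernel argument: Φ a' = 0
  set K := q ⊓ LinearMap.ker Φ with hK
  have hKst : ∀ g : G, ∀ u ∈ K, conjEnd ρ g u ∈ K := by
    intro g u hu
    obtain ⟨huq, huk⟩ := Submodule.mem_inf.mp hu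
    have huk' : Φ u = 0 := LinearMap.mem_ker.mp huk
    refine Submodule.mem_inf.mpr ⟨hqst g u huq, LinearMap.mem_ker.mpr ?_⟩
    show (ρ g ∘ₗ u ∘ₗ ρ g⁻¹) ∘ₗ T = 0
    ext v
    have h1 := congrFun (congrArg DFunLike.coe (hT g⁻¹)) v
    simp only [LinearMap.comp_apply] at h1 ⊢
    rw [← h1]
    have h2 : u (T (π g⁻¹ v)) = 0 := by
      have := congrFun (congrArg DFunLike.coe huk') (π g⁻¹ v)
      exact this
    rw [h2, map_zero]
    rfl
  obtain ⟨r, hrA, hrst, hKr0, hKr⟩ := hAcompred K (le_trans inf_le_left hqA) hKst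
  have hqKC : K ⊔ (r ⊓ q) = q := by
    have := sup_inf_assoc_of_le (y := r) (show K ≤ q from inf_le_left)
    rw [← this, hKr]
    exact inf_eq_right.mpr hqA
  have ha'q : a' ∈ K ⊔ (r ⊓ q) := by rw [hqKC]; exact ha'
  obtain ⟨k, hk, cc, hcc, hkcc⟩ := Submodule.mem_sup.mp ha'q
  have hΦk : Φ k = 0 := LinearMap.mem_ker.mp hk.2
  have hΦcc : Φ cc = Φ a' := by rw [← hkcc, map_add, hΦk, zero_add]
  -- cc is invariant
  have hccinv : ∀ g : G, conjEnd ρ g cc = cc := by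
    intro g
    have hmem : conjEnd ρ g cc - cc ∈ r ⊓ q :=
      sub_mem ⟨hrst g cc hcc.1, hqst g cc hcc.2⟩ hcc
    have hker : conjEnd ρ g cc - cc ∈ LinearMap.ker Φ := by
      rw [LinearMap.mem_ker, map_sub, sub_eq_zero]
      show (ρ g ∘ₗ cc ∘ₗ ρ g⁻¹) ∘ₗ T = cc ∘ₗ T
      ext v
      have h1 := congrFun (congrArg DFunLike.coe (hT g⁻¹)) v
      simp only [LinearMap.comp_apply] at h1 ⊢
      rw [← h1]
      have h2 : Φ cc ∘ₗ π g⁻¹ = ρ g⁻¹ ∘ₗ Φ cc := (hΦcc ▸ hΦa') g⁻¹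
      have h3 := congrFun (congrArg DFunLike.coe h2) v
      simp only [LinearMap.comp_apply] at h3
      show (ρ g) (cc ((T ∘ₗ π g⁻¹) v)) = cc (T v)
      have h4 : (T ∘ₗ π g⁻¹) v = T (π g⁻¹ v) := rfl
      rw [h4]
      have h5 : cc (T (π g⁻¹ v)) = ρ g⁻¹ (cc (T v)) := h3
      rw [h5]
      have : (ρ g * ρ g⁻¹) (cc (T v)) = (1 : Module.End ℂ L) (cc (T v)) := by
        rw [← map_mul, mul_inv_cancel, map_one]
      simpa using this
    have : conjEnd ρ g cc - cc ∈ K ⊓ r := by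
      refine ⟨⟨hmem.2, hker⟩, hmem.1⟩
    rw [hKr0] at this
    exact sub_eq_zero.mp this
  -- cc ∈ p ⊓ q = ⊥
  have hcc0 : cc = 0 := by
    have : cc ∈ p ⊓ q := ⟨⟨hqA hcc.2, hccinv⟩, hcc.2⟩
    rw [hpq0] at this
    exact this
  have hΦa'0 : Φ a' = 0 := by rw [← hΦcc, hcc0, map_zero]
  refine ⟨b, hb.1, hb.2, ?_⟩
  have : S = Φ b := by rw [← hΦa, ← hba, map_add, hΦa'0, add_zero]
  exact this.symm

lemma rank_homG_le {G L V : Type*} [Group G] [AddCommGroup L] [Module ℂ L]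
    [AddCommGroup V] [Module ℂ V] [FiniteDimensional ℂ V]
    (ρ : Representation ℂ G L) (π : Representation ℂ G V)
    (hrank : Module.rank ℂ L ≤ Cardinal.aleph0) :
    Module.rank ℂ ↥(homG ρ π) ≤ Cardinal.aleph0 := by
  set bV := Module.finBasis ℂ V with hbV
  set ev : ↥(homG ρ π) →ₗ[ℂ] (Fin (Module.finrank ℂ V) → L) :=
    { toFun := fun T => fun i => T.1 (bV i)
      map_add' := fun T S => rfl
      map_smul' := fun c T => rfl } with hev
  have hinj : Function.Injective ev := by
    intro T S h
    apply Subtype.ext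
    exact bV.ext fun i => congrFun h i
  have h1 := ev.lift_rank_le_of_injective hinj
  have h2 : Module.rank ℂ (Fin (Module.finrank ℂ V) → L) ≤ Cardinal.aleph0 := by
    rw [rank_pi]
    calc Cardinal.sum (fun _ : Fin (Module.finrank ℂ V) => Module.rank ℂ L)
        ≤ Cardinal.sum (fun _ : Fin (Module.finrank ℂ V) => Cardinal.aleph0) :=
          Cardinal.sum_le_sum _ _ (fun _ => hrank)
      _ = Cardinal.lift (Cardinal.mk (Fin (Module.finrank ℂ V))) * Cardinal.lift Cardinal.aleph0 :=
          Cardinal.sum_const _ _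
      _ ≤ Cardinal.aleph0 * Cardinal.aleph0 := by
          rw [Cardinal.lift_aleph0]
          exact mul_le_mul' (by simp [Cardinal.mk_fin])
            le_rfl
      _ = Cardinal.aleph0 := Cardinal.aleph0_mul_aleph0
  have h3 := h1.trans (Cardinal.lift_le.mpr h2)
  rw [Cardinal.lift_aleph0] at h3
  exact Cardinal.lift_le_aleph0.mp h3

lemma comp_mem_homG {G L V : Type*} [Group G] [AddCommGroup L] [Module ℂ L]
    [AddCommGroup V] [Module ℂ V]
    (ρ : Representation ℂ G L) (π : Representation ℂ G V)
    {b : Module.End ℂ L} (hbinv : ∀ g : G, conjEnd ρ g b = b)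
    {T : V →ₗ[ℂ] L} (hT : T ∈ homG ρ π) : b ∘ₗ T ∈ homG ρ π := by
  intro g
  ext v
  show b (T (π g v)) = ρ g (b (T v))
  have h1 := congrFun (congrArg DFunLike.coe (hT g)) v
  simp only [LinearMap.comp_apply] at h1
  rw [h1, inv_comm ρ hbinv g (T v)]

/-- Composition with an invariant operator, as an endomorphism of `Hom_G(V, L)`. -/
def compMap {G L V : Type*} [Group G] [AddCommGroup L] [Module ℂ L]
    [AddCommGroup V] [Module ℂ V]
    (ρ : Representation ℂ G L) (π : Representation ℂ G V)
    (b : Module.End ℂ L) (hbinv : ∀ g : G, conjEnd ρ g b = b) :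
    ↥(homG ρ π) →ₗ[ℂ] ↥(homG ρ π) where
  toFun T := ⟨b ∘ₗ T.1, comp_mem_homG ρ π hbinv T.2⟩
  map_add' T S := Subtype.ext (by simp [LinearMap.comp_add])
  map_smul' c T := Subtype.ext (by simp [LinearMap.comp_smul])

lemma scalar_action {G L : Type*} [Group G] [AddCommGroup L] [Module ℂ L]
    (ρ : Representation ℂ G L)
    (hrank : Module.rank ℂ L ≤ Cardinal.aleph0)
    (A : Subalgebra ℂ (Module.End ℂ L))
    (hAirr : ∀ p : Submodule ℂ L, (∀ T ∈ A, ∀ x ∈ p, T x ∈ p) → p = ⊥ ∨ p = ⊤)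
    (hAcompred : ∀ p : Submodule ℂ (Module.End ℂ L),
      p ≤ Subalgebra.toSubmodule A → (∀ g : G, ∀ S ∈ p, conjEnd ρ g S ∈ p) →
      ∃ q : Submodule ℂ (Module.End ℂ L), q ≤ Subalgebra.toSubmodule A ∧
        (∀ g : G, ∀ S ∈ q, conjEnd ρ g S ∈ q) ∧
        p ⊓ q = ⊥ ∧ p ⊔ q = Subalgebra.toSubmodule A)
    {V : Type*} [AddCommGroup V] [Module ℂ V] [FiniteDimensional ℂ V]
    (π : Representation ℂ G V)
    (hVirr : ∀ p : Submodule ℂ V, (∀ g : G, ∀ v ∈ p, π g v ∈ p) → p = ⊥ ∨ p = ⊤)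
    {T₀ : V →ₗ[ℂ] L} (hT₀m : T₀ ∈ homG ρ π) (hT₀ : T₀ ≠ 0)
    (Z : Module.End ℂ L) (hZ : IsCentralInvariant ρ A Z) :
    ∃ c : ℂ, ∀ T ∈ homG ρ π, Z ∘ₗ T = c • T := by
  obtain ⟨hZA, hZinv, hZc⟩ := hZ
  set M := ↥(homG ρ π) with hM
  set φ : M →ₗ[ℂ] M := compMap ρ π Z hZinv with hφ
  -- simplicity of homG under invariant composition
  have hsimple : ∀ W : Submodule ℂ M,
      (∀ (b : Module.End ℂ L) (hbA : b ∈ A) (hbi : ∀ g : G, conjEnd ρ g b = b),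
        ∀ x ∈ W, compMap ρ π b hbi x ∈ W) → W = ⊥ ∨ W = ⊤ := by
    intro W hWst
    rcases eq_or_ne W ⊥ with h | h
    · exact Or.inl h
    · refine Or.inr (Submodule.eq_top_iff'.mpr fun S => ?_)
      obtain ⟨x, hxW, hx0⟩ := Submodule.ne_bot_iff _ |>.mp h
      have hx1 : (x : V →ₗ[ℂ] L) ≠ 0 := fun h0 => hx0 (Subtype.ext h0)
      obtain ⟨b, hbA, hbi, hbx⟩ :=
        transitivity ρ hrank A hAirr hAcompred π hVirr x.2 S.2 hx1
      have : compMap ρ π b hbi x = S := Subtype.ext hbx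
      rw [← this]
      exact hWst b hbA hbi x hxW
  have hrankM : Module.rank ℂ M ≤ Cardinal.aleph0 := rank_homG_le ρ π hrank
  -- commutation of φ - c•1 with invariant compositions
  have hψcomm : ∀ (c : ℂ) (b : Module.End ℂ L) (_ : b ∈ A) (hbi : ∀ g : G, conjEnd ρ g b = b)
      (x : M), (φ - c • 1) (compMap ρ π b hbi x) = compMap ρ π b hbi ((φ - c • 1) x) := by
    intro c b hbA hbi x
    apply Subtype.ext
    have hcomm : Z * b = b * Z := hZc b hbA hbi
    show Z ∘ₗ (b ∘ₗ x.1) - c • (b ∘ₗ x.1) = b ∘ₗ (Z ∘ₗ x.1 - c • x.1)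
    have h1 : Z ∘ₗ (b ∘ₗ x.1) = b ∘ₗ (Z ∘ₗ x.1) := by
      show (Z * b) ∘ₗ x.1 = (b * Z) ∘ₗ x.1
      rw [hcomm]
    rw [LinearMap.comp_sub, LinearMap.comp_smul, h1]
  -- if φ is never a scalar, every φ - c•1 is bijective, contradicting Dixmier
  by_contra hnosc
  push_neg at hnosc
  have hbij : ∀ c : ℂ, Function.Bijective (φ - c • (1 : Module.End ℂ M)) := by
    intro c
    set ψ := φ - c • (1 : Module.End ℂ M) with hψdef
    have hψ0 : ψ ≠ 0 := by
      intro h0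
      obtain ⟨T, hTm, hTne⟩ := hnosc c
      apply hTne
      have h1 := congrFun (congrArg DFunLike.coe h0) ⟨T, hTm⟩
      have h2 := congrArg Subtype.val h1
      have h3 : Z ∘ₗ T - c • T = 0 := h2
      exact sub_eq_zero.mp h3
    have hker := hsimple (LinearMap.ker ψ) (fun b hbA hbi x hx => by
      rw [LinearMap.mem_ker] at hx ⊢
      rw [hψcomm c b hbA hbi x, hx, map_zero])
    have hran := hsimple (LinearMap.range ψ) (fun b hbA hbi x hx => by
      obtain ⟨u, rfl⟩ := hx
      exact ⟨compMap ρ π b hbi u, (hψcomm c b hbA hbi u)⟩)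
    rcases hker with hk | hk
    · rcases hran with hr | hr
      · exact absurd (LinearMap.range_eq_bot.mp hr) hψ0
      · exact ⟨LinearMap.ker_eq_bot.mp hk, LinearMap.range_eq_top.mp hr⟩
    · exact absurd (LinearMap.ker_eq_top.mp hk) hψ0
  exact dixmier hrankM (v₀ := (⟨T₀, hT₀m⟩ : M))
    (fun h => hT₀ (congrArg Subtype.val h)) φ (fun c => (hbij c).1) (fun c => (hbij c).2)

/-- **Abstract Frobenius decomposition, Theorem 2.2, part 3.**
Under the standing hypotheses on `G`, `L` and `A`, every element `Z` of the
center of `A^G` acts on the multiplicity space `Hom_G(V, L)` of a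
finite-dimensional irreducible `G`-representation `V` by a scalar `χ(Z)`;
if `Hom_G(V, L) ≠ 0`, the map `Z ↦ χ(Z)` is a `ℂ`-algebra homomorphism from
the center of `A^G` to `ℂ` (the central character). -/
theorem multiplicity_space_central_character
    {G L : Type*} [Group G] [AddCommGroup L] [Module ℂ L]
    (ρ : Representation ℂ G L)
    -- `L` has countable dimension
    (hcount : ∃ s : Set L, s.Countable ∧ Submodule.span ℂ s = ⊤)
    -- the `G`-action on `L` is locally finite
    (hlocfin : ∀ v : L, ∃ Y : Submodule ℂ L,
      (∀ g : G, ∀ y ∈ Y, ρ g y ∈ Y) ∧ FiniteDimensional ℂ Y ∧ v ∈ Y)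
    -- the `G`-action on `L` is completely reducible
    (hcompred : ∀ p : Submodule ℂ L, (∀ g : G, ∀ y ∈ p, ρ g y ∈ p) →
      ∃ q : Submodule ℂ L, (∀ g : G, ∀ y ∈ q, ρ g y ∈ q) ∧ IsCompl p q)
    (A : Subalgebra ℂ (Module.End ℂ L))
    -- `A` acts irreducibly on `L`
    (hAirr : ∀ p : Submodule ℂ L, (∀ T ∈ A, ∀ x ∈ p, T x ∈ p) → p = ⊥ ∨ p = ⊤)
    -- `A` is invariant under the conjugation `G`-action
    (hAG : ∀ g : G, ∀ T ∈ A, conjEnd ρ g T ∈ A)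
    -- the `G`-action on `A` is locally finite
    (hAlocfin : ∀ T ∈ A, ∃ E : Submodule ℂ (Module.End ℂ L),
      E ≤ Subalgebra.toSubmodule A ∧ (∀ g : G, ∀ S ∈ E, conjEnd ρ g S ∈ E) ∧
      FiniteDimensional ℂ E ∧ T ∈ E)
    -- the `G`-action on `A` is completely reducible
    (hAcompred : ∀ p : Submodule ℂ (Module.End ℂ L),
      p ≤ Subalgebra.toSubmodule A → (∀ g : G, ∀ S ∈ p, conjEnd ρ g S ∈ p) →
      ∃ q : Submodule ℂ (Module.End ℂ L), q ≤ Subalgebra.toSubmodule A ∧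
        (∀ g : G, ∀ S ∈ q, conjEnd ρ g S ∈ q) ∧
        p ⊓ q = ⊥ ∧ p ⊔ q = Subalgebra.toSubmodule A)
    -- `(π, V)` is a finite-dimensional irreducible `G`-representation
    {V : Type*} [AddCommGroup V] [Module ℂ V] [FiniteDimensional ℂ V]
    (π : Representation ℂ G V)
    (hVirr : ∀ p : Submodule ℂ V, (∀ g : G, ∀ v ∈ p, π g v ∈ p) → p = ⊥ ∨ p = ⊤) :
    -- every central invariant operator acts by a scalar on `Hom_G(V, L)`
    (∀ Z : Module.End ℂ L, IsCentralInvariant ρ A Z →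
      ∃ c : ℂ, ∀ T ∈ homG ρ π, Z ∘ₗ T = c • T) ∧
    -- and if `Hom_G(V, L) ≠ 0`, then `Z ↦ χ(Z)` is a `ℂ`-algebra homomorphism
    (homG ρ π ≠ ⊥ → ∃ χ : Module.End ℂ L → ℂ,
      (∀ Z : Module.End ℂ L, IsCentralInvariant ρ A Z →
        ∀ T ∈ homG ρ π, Z ∘ₗ T = χ Z • T) ∧
      χ 1 = 1 ∧
      (∀ Z₁ Z₂ : Module.End ℂ L, IsCentralInvariant ρ A Z₁ →
        IsCentralInvariant ρ A Z₂ →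
        χ (Z₁ * Z₂) = χ Z₁ * χ Z₂ ∧ χ (Z₁ + Z₂) = χ Z₁ + χ Z₂) ∧
      (∀ (c : ℂ) (Z : Module.End ℂ L), IsCentralInvariant ρ A Z →
        χ (c • Z) = c * χ Z)) := by
  -- `L` has countable dimension
  have hrank : Module.rank ℂ L ≤ Cardinal.aleph0 := by
    obtain ⟨s, hsc, hsp⟩ := hcount
    have h1 := rank_span_le (R := ℂ) s
    rw [hsp, rank_top] at h1
    exact h1.trans (Cardinal.mk_le_aleph0_iff.mpr hsc.to_subtype)
  have part1 : ∀ Z : Module.End ℂ L, IsCentralInvariant ρ A Z →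
      ∃ c : ℂ, ∀ T ∈ homG ρ π, Z ∘ₗ T = c • T := by
    intro Z hZ
    rcases eq_or_ne (homG ρ π) ⊥ with h | h
    · refine ⟨0, fun T hT => ?_⟩
      rw [h, Submodule.mem_bot] at hT
      rw [hT, zero_smul, LinearMap.comp_zero]
    · obtain ⟨T₀, hT₀m, hT₀⟩ := Submodule.ne_bot_iff _ |>.mp h
      exact scalar_action ρ hrank A hAirr hAcompred π hVirr hT₀m hT₀ Z hZ
  refine ⟨part1, fun hne => ?_⟩
  obtain ⟨T₀, hT₀m, hT₀⟩ := Submodule.ne_bot_iff _ |>.mp hne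
  classical
  set χ : Module.End ℂ L → ℂ := fun Z =>
    if h : IsCentralInvariant ρ A Z then (part1 Z h).choose else 0 with hχ
  have hspec : ∀ Z : Module.End ℂ L, IsCentralInvariant ρ A Z →
      ∀ T ∈ homG ρ π, Z ∘ₗ T = χ Z • T := by
    intro Z hZ T hT
    have hval : χ Z = (part1 Z hZ).choose := by
      show (if h : IsCentralInvariant ρ A Z then (part1 Z h).choose else 0) = _
      rw [dif_pos hZ]
    rw [hval]
    exact (part1 Z hZ).choose_spec T hT
  have huniq : ∀ (Z : Module.End ℂ L), IsCentralInvariant ρ A Z → ∀ c : ℂ,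
      Z ∘ₗ T₀ = c • T₀ → χ Z = c := by
    intro Z hZ c hc
    have h1 := hspec Z hZ T₀ hT₀m
    have h2 : (χ Z - c) • T₀ = 0 := by rw [sub_smul, ← h1, hc, sub_self]
    by_contra hne2
    have hd : χ Z - c ≠ 0 := sub_ne_zero.mpr hne2
    apply hT₀
    calc T₀ = (χ Z - c)⁻¹ • ((χ Z - c) • T₀) := by
          rw [smul_smul, inv_mul_cancel₀ hd, one_smul]
      _ = 0 := by rw [h2, smul_zero]
  refine ⟨χ, hspec, ?_, ?_, ?_⟩
  · -- χ 1 = 1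
    have h1c : IsCentralInvariant ρ A 1 :=
      ⟨one_mem A, conjEnd_one ρ, fun D _ _ => by rw [one_mul, mul_one]⟩
    refine huniq 1 h1c 1 ?_
    ext v
    simp
  · -- multiplicative and additive
    intro Z₁ Z₂ hZ₁ hZ₂
    constructor
    · have hc : IsCentralInvariant ρ A (Z₁ * Z₂) :=
        ⟨mul_mem hZ₁.1 hZ₂.1,
         fun g => by rw [conjEnd_mul, hZ₁.2.1 g, hZ₂.2.1 g],
         fun D hD hDi => by
          rw [mul_assoc, hZ₂.2.2 D hD hDi, ← mul_assoc, hZ₁.2.2 D hD hDi, mul_assoc]⟩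
      refine huniq _ hc _ ?_
      have h1 : (Z₁ * Z₂) ∘ₗ T₀ = Z₁ ∘ₗ (Z₂ ∘ₗ T₀) := rfl
      rw [h1, hspec Z₂ hZ₂ T₀ hT₀m, LinearMap.comp_smul, hspec Z₁ hZ₁ T₀ hT₀m,
        smul_smul, mul_comm (χ Z₂) (χ Z₁)]
    · have hc : IsCentralInvariant ρ A (Z₁ + Z₂) :=
        ⟨add_mem hZ₁.1 hZ₂.1,
         fun g => by rw [map_add, hZ₁.2.1 g, hZ₂.2.1 g],
         fun D hD hDi => by rw [add_mul, mul_add, hZ₁.2.2 D hD hDi, hZ₂.2.2 D hD hDi]⟩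
      refine huniq _ hc _ ?_
      rw [LinearMap.add_comp, hspec Z₁ hZ₁ T₀ hT₀m, hspec Z₂ hZ₂ T₀ hT₀m, add_smul]
  · -- homogeneous
    intro c Z hZ
    have hc : IsCentralInvariant ρ A (c • Z) :=
      ⟨SMulMemClass.smul_mem c hZ.1,
       fun g => by rw [map_smul, hZ.2.1 g],
       fun D hD hDi => by
        rw [Algebra.smul_mul_assoc, Algebra.mul_smul_comm, hZ.2.2 D hD hDi]⟩
    refine huniq _ hc _ ?_
    rw [LinearMap.smul_comp, hspec Z hZ T₀ hT₀m, smul_smul]
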